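/- Let α, β, σ > 0 with β = π²/(4σ²), let Ξ > 0, and set κ = exp(−n σβ Ξ^{1/(2n)}/(2πe)). If α ≤ qπ where q = (σ/e)Ξ when Ξ ≤ 1 and q = σ/e when Ξ > 1, then for every ℓ ∈ ℝ^n and all x ∈ ℝ^n, ∫_{ℝ^n} e^{−α‖y−ℓ‖²} ψ_β(x−y) dy ≥ κ e^{−α‖x−ℓ‖²}. -/

import Mathlib

open MeasureTheory Real

noncomputable section

/-- `ψ_β(x) = (π/β)^{n/2} e^{−(π²/β)‖x‖²}`, the Fourier transform of `φ_β(x)=e^{−β‖x‖²}`. -/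
def psi {n : ℕ} (β : ℝ) : EuclideanSpace ℝ (Fin n) → ℝ :=
  fun x => (Real.pi / β) ^ ((n : ℝ) / 2) * Real.exp (-(Real.pi ^ 2 / β) * ‖x‖ ^ 2)

open scoped RealInnerProductSpace in
open Complex GaussianFourier in
lemma integral_rexp_quad {V : Type*} [NormedAddCommGroup V] [InnerProductSpace ℝ V]
    [FiniteDimensional ℝ V] [MeasurableSpace V] [BorelSpace V]
    {b : ℝ} (hb : 0 < b) (c : ℝ) (w : V) :
    ∫ v : V, Real.exp (-b * ‖v‖^2 + c * ⟪w, v⟫) =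
      (π / b) ^ ((Module.finrank ℝ V : ℝ) / 2) * Real.exp (c^2 * ‖w‖^2 / (4*b)) := by
  rw [← Complex.ofReal_inj]
  have h := integral_cexp_neg_mul_sq_norm_add (V := V)
      (show 0 < (b : ℂ).re from hb) (c : ℂ) w
  have hl : (((∫ v : V, Real.exp (-b * ‖v‖^2 + c * ⟪w, v⟫)) : ℝ) : ℂ) =
      ∫ v : V, Complex.exp (-(b:ℂ) * ‖v‖^2 + (c:ℂ) * ⟪w, v⟫) := by
    change Complex.ofRealLI (∫ v : V, Real.exp (-b * ‖v‖^2 + c * ⟪w, v⟫)) = _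
    rw [← Complex.ofRealLI.integral_comp_comm]
    congr 1
    ext v
    simp [Complex.ofRealLI, Complex.ofReal_exp]
    change ((Real.exp (-(b * ‖v‖ ^ 2) + c * ⟪w, v⟫) : ℝ) : ℂ) = _
    push_cast
    rfl
  rw [hl, h, Complex.ofReal_mul, Complex.ofReal_cpow (div_pos pi_pos hb).le,
    Complex.ofReal_exp]
  push_cast
  ring_nf

open scoped RealInnerProductSpace in
open GaussianFourier in
set_option maxHeartbeats 1000000 in
/-- **Lower bound for the smoothed Gaussian.** With `β = π²/(4σ²)`,
`κ = exp(−nσβΞ^{1/2n}/(2πe))` and `α ≤ qπ` where `q = (σ/e)Ξ` if `Ξ ≤ 1` and `q = σ/e`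
if `Ξ > 1`, one has `(e^{−α‖·−ℓ‖²} ⋆ ψ_β)(x) ≥ κ e^{−α‖x−ℓ‖²}` for all `x, ℓ`. -/
theorem smoothed_gaussian_lower_bound {n : ℕ} (α β σ Ξ : ℝ)
    (hα : 0 < α) (hσ : 0 < σ) (hΞ : 0 < Ξ)
    (hβ : β = Real.pi ^ 2 / (4 * σ ^ 2))
    (hrange : α ≤ (if Ξ ≤ 1 then σ / Real.exp 1 * Ξ else σ / Real.exp 1) * Real.pi)
    (ℓ x : EuclideanSpace ℝ (Fin n)) :
    (∫ y : EuclideanSpace ℝ (Fin n), Real.exp (-α * ‖y - ℓ‖ ^ 2) * psi β (x - y))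
      ≥ Real.exp (-(n : ℝ) * (σ * β * Ξ ^ (1 / (2 * (n : ℝ)))) / (2 * Real.pi * Real.exp 1)) *
        Real.exp (-α * ‖x - ℓ‖ ^ 2) := by
  have hπ := Real.pi_pos
  have hβ0 : 0 < β := by rw [hβ]; positivity
  set b : ℝ := Real.pi ^ 2 / β with hbdef
  have hb0 : 0 < b := by positivity
  have hA0 : 0 < α + b := by positivity
  set w : EuclideanSpace ℝ (Fin n) := α • ℓ + b • x with hw
  -- Step 1: rewrite the integrand
  have hint : ∀ y : EuclideanSpace ℝ (Fin n),
      Real.exp (-α * ‖y - ℓ‖ ^ 2) * psi β (x - y)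
        = ((π/β) ^ ((n:ℝ)/2) * Real.exp (-α * ‖ℓ‖^2 - b * ‖x‖^2)) *
          Real.exp (-(α+b) * ‖y‖^2 + 2 * ⟪w, y⟫) := by
    intro y
    have key : -α * ‖y - ℓ‖ ^ 2 + (-(Real.pi^2/β) * ‖x - y‖ ^ 2)
        = (-α * ‖ℓ‖^2 - b * ‖x‖^2) + (-(α+b) * ‖y‖^2 + 2 * ⟪w, y⟫) := by
      have h1 : ‖y - ℓ‖^2 = ‖y‖^2 - 2*⟪y,ℓ⟫ + ‖ℓ‖^2 := norm_sub_sq_real y ℓ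
      have h2 : ‖x - y‖^2 = ‖x‖^2 - 2*⟪x,y⟫ + ‖y‖^2 := norm_sub_sq_real x y
      have h3 : ⟪w, y⟫ = α*⟪ℓ,y⟫ + b*⟪x,y⟫ := by
        simp [hw, inner_add_left, real_inner_smul_left, Finset.mul_sum, mul_assoc]
      have h4 : ⟪y,ℓ⟫ = ⟪ℓ,y⟫ := real_inner_comm _ _
      rw [h1, h2, h3, h4, hbdef]; ring
    unfold psi
    rw [mul_left_comm, ← Real.exp_add, key, Real.exp_add, ← mul_assoc]
  simp only [hint]
  rw [MeasureTheory.integral_const_mul, integral_rexp_quad hA0 2 w,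
    finrank_euclideanSpace_fin]
  -- Step 2: combine the exponentials
  have hw2 : (2:ℝ)^2 * ‖w‖^2 / (4*(α+b)) + (-α * ‖ℓ‖^2 - b * ‖x‖^2)
      = -(α*b/(α+b)) * ‖x - ℓ‖^2 := by
    have hwn : ‖w‖^2 = α^2*‖ℓ‖^2 + 2*(α*b)*⟪ℓ,x⟫ + b^2*‖x‖^2 := by
      have h := norm_add_sq_real (α • ℓ) (b • x)
      rw [hw, h, norm_smul, norm_smul, real_inner_smul_left, real_inner_smul_right]
      simp [abs_of_pos hα, abs_of_pos hb0, mul_pow]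
      ring
    have hxl : ‖x - ℓ‖^2 = ‖x‖^2 - 2*⟪ℓ,x⟫ + ‖ℓ‖^2 := by
      rw [norm_sub_sq_real, real_inner_comm]
    rw [hwn, hxl]
    field_simp
    ring
  -- Step 3: the coefficient
  set C : ℝ := (π/β) ^ ((n:ℝ)/2) * (π/(α+b)) ^ ((n:ℝ)/2) with hC
  have hCval : C = (Real.pi^2/(β*α + Real.pi^2)) ^ ((n:ℝ)/2) := by
    rw [hC, ← Real.mul_rpow (by positivity) (by positivity)]
    congr 1
    rw [hbdef]
    field_simp
  have hCpos : 0 < C := by rw [hCval]; positivity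
  have hR1 : (1:ℝ) < (β*α + Real.pi^2)/Real.pi^2 := by
    rw [lt_div_iff₀ (by positivity)]; nlinarith
  -- key numeric inequality: log((βα+π²)/π²) ≤ σβΞ^{1/(2n)}/(πe), for n ≥ 1
  have hlog : n ≠ 0 → Real.log ((β*α + Real.pi^2)/Real.pi^2)
      ≤ σ * β * Ξ ^ (1 / (2 * (n:ℝ))) / (Real.pi * Real.exp 1) := by
    intro hn
    have hlog1 : Real.log ((β*α + Real.pi^2)/Real.pi^2) ≤ (β*α + Real.pi^2)/Real.pi^2 - 1 :=
      Real.log_le_sub_one_of_pos (by positivity)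
    have hval : (β*α + Real.pi^2)/Real.pi^2 - 1 = α/(4*σ^2) := by
      rw [hβ]; field_simp; ring
    have he : (0:ℝ) < Real.exp 1 := Real.exp_pos 1
    have hexp_le : (1:ℝ) / (2*(n:ℝ)) ≤ 1 := by
      have : (1:ℝ) ≤ (n:ℝ) := by exact_mod_cast Nat.one_le_iff_ne_zero.mpr hn
      rw [div_le_one (by linarith)]; linarith
    have hexp_nonneg : (0:ℝ) ≤ 1 / (2*(n:ℝ)) := by positivity
    have hΞle : min Ξ 1 ≤ Ξ ^ (1 / (2 * (n:ℝ))) := by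
      rcases le_total Ξ 1 with h | h
      · rw [min_eq_left h]
        calc Ξ = Ξ ^ (1:ℝ) := (Real.rpow_one Ξ).symm
        _ ≤ Ξ ^ (1 / (2 * (n:ℝ))) := Real.rpow_le_rpow_of_exponent_ge hΞ h hexp_le
      · rw [min_eq_right h]
        exact Real.one_le_rpow h hexp_nonneg
    have hα' : α ≤ σ / Real.exp 1 * min Ξ 1 * Real.pi := by
      rcases le_or_gt Ξ 1 with h | h
      · rw [min_eq_left h]; rw [if_pos h] at hrange; exact hrange
      · rw [min_eq_right h.le, mul_one]; rw [if_neg (not_le.mpr h)] at hrange; exact hrange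
    have hσβ : σ * β = Real.pi^2/(4*σ) := by rw [hβ]; field_simp
    apply le_trans hlog1
    rw [hval, hσβ]
    have hT0 : 0 < Ξ ^ (1 / (2 * (n:ℝ))) := Real.rpow_pos_of_pos hΞ _
    rw [div_le_div_iff₀ (by positivity) (by positivity)]
    have hid : (σ / Real.exp 1 * min Ξ 1 * Real.pi) * (Real.pi * Real.exp 1)
        = Real.pi^2 * min Ξ 1 * σ := by field_simp
    have hid2 : Real.pi^2/(4*σ) * Ξ ^ (1 / (2 * (n:ℝ))) * (4*σ^2)
        = Real.pi^2 * Ξ ^ (1 / (2 * (n:ℝ))) * σ := by field_simp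
    rw [hid2]
    calc α * (Real.pi * Real.exp 1)
        ≤ (σ / Real.exp 1 * min Ξ 1 * Real.pi) * (Real.pi * Real.exp 1) :=
          mul_le_mul_of_nonneg_right hα' (by positivity)
      _ = Real.pi^2 * min Ξ 1 * σ := hid
      _ ≤ Real.pi^2 * Ξ ^ (1 / (2 * (n:ℝ))) * σ := by
          apply mul_le_mul_of_nonneg_right _ hσ.le
          exact mul_le_mul_of_nonneg_left hΞle (by positivity)
  -- Step 4: C ≥ κ
  have hCge : Real.exp (-(n : ℝ) * (σ * β * Ξ ^ (1 / (2 * (n : ℝ)))) / (2 * Real.pi * Real.exp 1))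
      ≤ C := by
    rw [hCval, show (Real.pi^2/(β*α+Real.pi^2)) ^ ((n:ℝ)/2)
      = Real.exp (Real.log (Real.pi^2/(β*α+Real.pi^2)) * ((n:ℝ)/2)) from
      Real.rpow_def_of_pos (by positivity) _]
    apply Real.exp_le_exp.mpr
    have hloginv : Real.log (Real.pi^2/(β*α + Real.pi^2))
        = - Real.log ((β*α + Real.pi^2)/Real.pi^2) := by
      rw [← Real.log_inv]; congr 1; rw [inv_div]
    rw [hloginv]
    rcases Nat.eq_zero_or_pos n with hn | hn
    · subst hn; simp
    · have h := hlog (Nat.pos_iff_ne_zero.mp hn)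
      have hn2 : (0:ℝ) ≤ (n:ℝ)/2 := by positivity
      have heq : σ * β * Ξ ^ (1 / (2 * (n:ℝ))) / (Real.pi * Real.exp 1) * ((n:ℝ)/2)
          = (n:ℝ) * (σ * β * Ξ ^ (1 / (2 * (n:ℝ)))) / (2 * Real.pi * Real.exp 1) := by ring
      have h2 := mul_le_mul_of_nonneg_right h hn2
      rw [heq] at h2
      have hneg : -(n:ℝ) * (σ * β * Ξ ^ (1 / (2 * (n:ℝ)))) / (2 * Real.pi * Real.exp 1)
          = -((n:ℝ) * (σ * β * Ξ ^ (1 / (2 * (n:ℝ)))) / (2 * Real.pi * Real.exp 1)) := by ring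
      rw [hneg]
      linarith
  -- Step 5: the exponent
  have hexp_ge : Real.exp (-α * ‖x - ℓ‖ ^ 2) ≤ Real.exp (-(α*b/(α+b)) * ‖x - ℓ‖^2) := by
    apply Real.exp_le_exp.mpr
    have hγ : α*b/(α+b) ≤ α := by
      rw [div_le_iff₀ hA0]; nlinarith
    have := mul_le_mul_of_nonneg_right hγ (sq_nonneg ‖x - ℓ‖)
    linarith
  rw [ge_iff_le]
  calc Real.exp (-(n : ℝ) * (σ * β * Ξ ^ (1 / (2 * (n : ℝ)))) / (2 * Real.pi * Real.exp 1)) *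
        Real.exp (-α * ‖x - ℓ‖ ^ 2)
      ≤ C * Real.exp (-(α*b/(α+b)) * ‖x - ℓ‖^2) :=
        mul_le_mul hCge hexp_ge (Real.exp_pos _).le hCpos.le
    _ = (π/β) ^ ((n:ℝ)/2) * Real.exp (-α * ‖ℓ‖^2 - b * ‖x‖^2) *
          ((π/(α+b)) ^ ((n:ℝ)/2) * Real.exp (2^2 * ‖w‖^2 / (4*(α+b)))) := by
        rw [hC, ← hw2, Real.exp_add]; ring
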